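/- In the two-stage model with η'(·, θ₀) a bounded Borel function on [a,b], fix n₂ ≥ 1 and for 1 ≤ j ≤ n₂ let F_j = σ(ȳ₁, ε_{2,1}, …, ε_{2,j}) (with F₀ = σ(ȳ₁)) and let 𝒟_j(θ₀) = σ^{-2}(y_{2,j} − η(x₂, θ₀))·η'(x₂, θ₀) be the j-th subject-wise second-stage score increment. Then E[𝒟_j(θ₀)² | F_{j−1}] = η'(x₂, θ₀)²/σ² almost surely for every j; consequently the subject-wise and the stage-wise incremental expected information coincide: I^𝒟_n(θ₀) = I^D_n(θ₀) = (n₁/σ²)·η'(x₁, θ₀)² + (n₂/σ²)·η'(x₂, θ₀)². -/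

import Mathlib

open MeasureTheory ProbabilityTheory Filter

open scoped NNReal ENNReal Topology


lemma aux_integral_sq_exp {b : ℝ} (hb : 0 < b) :
    ∫ x : ℝ, x ^ 2 * Real.exp (-b * x ^ 2) = Real.sqrt (Real.pi / b) / (2 * b) := by
  have hint2 : Integrable (fun x : ℝ => x ^ 2 * Real.exp (-b * x ^ 2)) := by
    have h := integrable_rpow_mul_exp_neg_mul_sq hb (s := 2) (by norm_num)
    have h2 : ∀ x : ℝ, x ^ (2 : ℝ) = x ^ 2 := fun x => by
      rw [show (2:ℝ) = ((2:ℕ):ℝ) by norm_num, Real.rpow_natCast]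
    simpa [h2] using h
  have hint1 : Integrable (fun x : ℝ => Real.exp (-b * x ^ 2)) := integrable_exp_neg_mul_sq hb
  have hderiv : ∀ x : ℝ, HasDerivAt (fun x : ℝ => x * Real.exp (-b * x ^ 2))
      (Real.exp (-b * x ^ 2) - 2 * b * (x ^ 2 * Real.exp (-b * x ^ 2))) x := by
    intro x
    have h1 : HasDerivAt (fun x : ℝ => -b * x ^ 2) (-b * (2 * x)) x := by
      simpa using (hasDerivAt_pow 2 x).const_mul (-b)
    have h3 := (hasDerivAt_id x).mul h1.exp
    refine h3.congr_deriv ?_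
    simp
    ring
  have htop : Tendsto (fun x : ℝ => x * Real.exp (-b * x ^ 2)) atTop (𝓝 0) := by
    have h := rpow_mul_exp_neg_mul_sq_isLittleO_exp_neg hb 1
    have h' : Tendsto (fun x : ℝ => Real.exp (-(1/2) * x)) atTop (𝓝 0) := by
      have : Tendsto (fun x : ℝ => -(1/2) * x) atTop atBot := by
        apply Tendsto.const_mul_atTop_of_neg (by norm_num) tendsto_id
      exact Real.tendsto_exp_atBot.comp this
    have h0 := h.trans_tendsto h'
    refine h0.congr' ?_
    filter_upwards [eventually_ge_atTop (0:ℝ)] with x hx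
    rw [Real.rpow_one]
  have hbot : Tendsto (fun x : ℝ => x * Real.exp (-b * x ^ 2)) atBot (𝓝 0) := by
    have h := (htop.comp tendsto_neg_atBot_atTop).neg
    simpa using h
  have key := integral_of_hasDerivAt_of_tendsto hderiv
    (hint1.sub (hint2.const_mul (2 * b))) hbot htop
  rw [integral_sub hint1 (hint2.const_mul (2 * b)), MeasureTheory.integral_const_mul,
    integral_gaussian, sub_zero] at key
  have h2b : (2 * b) ≠ 0 := by positivity
  field_simp at key ⊢
  linarith

lemma aux_integrable_sq_exp {b : ℝ} (hb : 0 < b) :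
    Integrable (fun x : ℝ => x ^ 2 * Real.exp (-b * x ^ 2)) := by
  have h := integrable_rpow_mul_exp_neg_mul_sq hb (s := 2) (by norm_num)
  have h2 : ∀ x : ℝ, x ^ (2 : ℝ) = x ^ 2 := fun x => by
    rw [show (2:ℝ) = ((2:ℕ):ℝ) by norm_num, Real.rpow_natCast]
  simpa [h2] using h

lemma aux_gauss_density_eq (v : ℝ≥0) (hv : v ≠ 0) (x : ℝ) :
    gaussianPDFReal 0 v x * x ^ 2 =
      (Real.sqrt (2 * Real.pi * v))⁻¹ * (x ^ 2 * Real.exp (-(2 * (v:ℝ))⁻¹ * x ^ 2)) := by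
  have hvr : (0:ℝ) < v := lt_of_le_of_ne v.coe_nonneg (by exact_mod_cast (Ne.symm hv))
  rw [gaussianPDFReal]
  rw [show -(x - 0) ^ 2 / (2 * (v:ℝ)) = -(2 * (v:ℝ))⁻¹ * x ^ 2 by field_simp; ring]
  ring

lemma aux_gaussian_sq_integrable {v : ℝ≥0} (hv : v ≠ 0) :
    Integrable (fun x : ℝ => x ^ 2) (gaussianReal 0 v) := by
  have hvr : (0:ℝ) < v := lt_of_le_of_ne v.coe_nonneg (by exact_mod_cast (Ne.symm hv))
  have hb : (0:ℝ) < (2 * (v:ℝ))⁻¹ := by positivity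
  rw [gaussianReal_of_var_ne_zero _ hv,
    show gaussianPDF 0 v = fun x => ((Real.toNNReal (gaussianPDFReal 0 v x) : ℝ≥0) : ℝ≥0∞) from rfl,
    integrable_withDensity_iff_integrable_smul ((measurable_gaussianPDFReal 0 v).real_toNNReal)]
  have : ∀ x : ℝ, (Real.toNNReal (gaussianPDFReal 0 v x) : ℝ≥0) • (x ^ 2) =
      (Real.sqrt (2 * Real.pi * v))⁻¹ * (x ^ 2 * Real.exp (-(2 * (v:ℝ))⁻¹ * x ^ 2)) := by
    intro x
    rw [NNReal.smul_def, Real.coe_toNNReal _ (gaussianPDFReal_nonneg 0 v x), smul_eq_mul,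
      aux_gauss_density_eq v hv x]
  simp only [this]
  exact (((aux_integrable_sq_exp hb)).const_mul _)


lemma aux_gaussian_sq_integral {v : ℝ≥0} (hv : v ≠ 0) :
    ∫ x, x ^ 2 ∂(gaussianReal 0 v) = (v : ℝ) := by
  have hvr : (0:ℝ) < v := lt_of_le_of_ne v.coe_nonneg (by exact_mod_cast (Ne.symm hv))
  have hb : (0:ℝ) < (2 * (v:ℝ))⁻¹ := by positivity
  rw [gaussianReal_of_var_ne_zero _ hv,
    show gaussianPDF 0 v = fun x => ((Real.toNNReal (gaussianPDFReal 0 v x) : ℝ≥0) : ℝ≥0∞) from rfl,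
    integral_withDensity_eq_integral_smul ((measurable_gaussianPDFReal 0 v).real_toNNReal)]
  have heq : ∀ x : ℝ, (Real.toNNReal (gaussianPDFReal 0 v x) : ℝ≥0) • (x ^ 2) =
      (Real.sqrt (2 * Real.pi * v))⁻¹ * (x ^ 2 * Real.exp (-(2 * (v:ℝ))⁻¹ * x ^ 2)) := by
    intro x
    rw [NNReal.smul_def, Real.coe_toNNReal _ (gaussianPDFReal_nonneg 0 v x), smul_eq_mul,
      aux_gauss_density_eq v hv x]
  simp only [heq]
  rw [MeasureTheory.integral_const_mul, aux_integral_sq_exp hb]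
  have hA : (0:ℝ) < 2 * Real.pi * v := by positivity
  have hfrac : Real.pi / (2 * (v:ℝ))⁻¹ = 2 * Real.pi * v := by field_simp
  rw [hfrac]
  have hs : Real.sqrt (2 * Real.pi * v) ≠ 0 := ne_of_gt (Real.sqrt_pos.mpr hA)
  field_simp

/-- In the two-stage adaptive model, each subject-wise second-stage score increment satisfies
`E[𝒟_j(θ₀)² | F_{j−1}] = η'(x₂, θ₀)²/σ²` a.s.; consequently the subject-wise and the
stage-wise incremental expected information coincide:
`I^𝒟_n(θ₀) = I^D_n(θ₀) = (n₁/σ²)·η'(x₁, θ₀)² + (n₂/σ²)·η'(x₂, θ₀)²`. -/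
theorem subjectwise_incremental_expected_information
    {Ω : Type*} [mΩ : MeasurableSpace Ω] (μ : Measure Ω) [IsProbabilityMeasure μ]
    (n₁ : ℕ) (hn₁ : 1 ≤ n₁) (a b x₁ θ₀ σ : ℝ) (hab : a ≤ b) (hσ : 0 < σ)
    (η η' : ℝ → ℝ → ℝ) (hη : Measurable fun x => η x θ₀)
    (hderiv : ∀ x θ, HasDerivAt (fun t => η x t) (η' x θ) θ)
    (hη' : Measurable fun x => η' x θ₀)
    (hη'bdd : ∃ C : ℝ, ∀ x ∈ Set.Icc a b, |η' x θ₀| ≤ C)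
    (ε : (Fin n₁ ⊕ ℕ) → Ω → ℝ) (hεmeas : ∀ k, Measurable (ε k))
    (hεindep : iIndepFun ε μ)
    (hεlaw : ∀ k, μ.map (ε k) = gaussianReal 0 ⟨σ ^ 2, sq_nonneg σ⟩)
    (ξ : ℝ → ℝ) (hξ : Measurable ξ) (hξab : ∀ y, ξ y ∈ Set.Icc a b)
    -- individual responses
    (y₁ : Fin n₁ → Ω → ℝ) (hy₁ : y₁ = fun i ω => η x₁ θ₀ + ε (Sum.inl i) ω)
    (ybar₁ : Ω → ℝ) (hybar₁ : ybar₁ = fun ω => (n₁ : ℝ)⁻¹ * ∑ i : Fin n₁, y₁ i ω)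
    (n₂ : ℕ) (hn₂ : 1 ≤ n₂)
    (y₂ : ℕ → Ω → ℝ) (hy₂ : y₂ = fun j ω => η (ξ (ybar₁ ω)) θ₀ + ε (Sum.inr j) ω)
    -- first-stage filtration `G i = σ(y₁ k, k < i)` and subject-wise increments
    (G : Fin n₁ → MeasurableSpace Ω)
    (hG : G = fun i => ⨆ k : Fin n₁, ⨆ _ : k < i,
      MeasurableSpace.comap (y₁ k) inferInstance)
    (𝒟₁ : Fin n₁ → Ω → ℝ)
    (h𝒟₁ : 𝒟₁ = fun i ω => (σ ^ 2)⁻¹ * (y₁ i ω - η x₁ θ₀) * η' x₁ θ₀)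
    -- second-stage filtration `F j = σ(ȳ₁, ε₂ₖ, k < j)` and subject-wise increments
    (F : ℕ → MeasurableSpace Ω)
    (hF : F = fun j => MeasurableSpace.comap ybar₁ inferInstance ⊔
      ⨆ k ∈ Finset.range j, MeasurableSpace.comap (ε (Sum.inr k)) inferInstance)
    (𝒟₂ : ℕ → Ω → ℝ)
    (h𝒟₂ : 𝒟₂ = fun j ω => (σ ^ 2)⁻¹ * (y₂ j ω - η (ξ (ybar₁ ω)) θ₀) * η' (ξ (ybar₁ ω)) θ₀) :
    (∀ j < n₂, μ[fun ω => (𝒟₂ j ω) ^ 2 | F j] =ᵐ[μ]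
        fun ω => (η' (ξ (ybar₁ ω)) θ₀) ^ 2 / σ ^ 2) ∧
      ((fun ω => ∑ i : Fin n₁, (μ[fun ω' => (𝒟₁ i ω') ^ 2 | G i]) ω +
          ∑ j ∈ Finset.range n₂, (μ[fun ω' => (𝒟₂ j ω') ^ 2 | F j]) ω) =ᵐ[μ]
        fun ω => ((n₁ : ℝ) / σ ^ 2) * (η' x₁ θ₀) ^ 2 +
          ((n₂ : ℝ) / σ ^ 2) * (η' (ξ (ybar₁ ω)) θ₀) ^ 2) := by
  have hσ2 : (0:ℝ) < σ ^ 2 := by positivity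
  have hσ2' : (σ:ℝ) ^ 2 ≠ 0 := ne_of_gt hσ2
  have hv : (⟨σ ^ 2, sq_nonneg σ⟩ : ℝ≥0) ≠ 0 := by
    intro h
    exact hσ2' (congrArg NNReal.toReal h)
  obtain ⟨C, hC⟩ := hη'bdd
  have hybar_meas : Measurable ybar₁ := by
    rw [hybar₁, hy₁]
    exact measurable_const.mul (Finset.measurable_sum _ fun i _ => measurable_const.add (hεmeas _))
  have hε2int : ∀ k, Integrable (fun ω => ε k ω ^ 2) μ := by
    intro k
    have h := aux_gaussian_sq_integrable hv
    rw [← hεlaw k] at h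
    have h2 := (integrable_map_measure ((by fun_prop : Measurable fun x : ℝ => x ^ 2).aestronglyMeasurable)
      (hεmeas k).aemeasurable).mp h
    exact h2
  have hε2val : ∀ k, ∫ ω, ε k ω ^ 2 ∂μ = σ ^ 2 := by
    intro k
    have h : ∫ x : ℝ, x ^ 2 ∂(μ.map (ε k)) = σ ^ 2 := by
      rw [hεlaw k, aux_gaussian_sq_integral hv]
      rfl
    rw [integral_map (hεmeas k).aemeasurable ((by fun_prop : Measurable fun x : ℝ => x ^ 2).aestronglyMeasurable)] at h
    simpa using h
  have hFle : ∀ j, F j ≤ mΩ := by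
    intro j; rw [hF]
    exact sup_le hybar_meas.comap_le (iSup₂_le fun k _ => (hεmeas _).comap_le)
  have hGle : ∀ i, G i ≤ mΩ := by
    intro i; rw [hG]
    refine iSup₂_le fun k _ => ?_
    rw [hy₁]
    exact (measurable_const.add (hεmeas _)).comap_le
  -- independence of ε₂ⱼ from F j
  have hindep₂ : ∀ j : ℕ,
      Indep (MeasurableSpace.comap (ε (Sum.inr j)) inferInstance) (F j) μ := by
    intro j
    have h := indep_iSup_of_disjoint (fun k => (hεmeas k).comap_le) hεindep
      (disjoint_compl_right (a := ({Sum.inr j} : Set (Fin n₁ ⊕ ℕ))))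
    have hleft : (⨆ k ∈ ({Sum.inr j} : Set (Fin n₁ ⊕ ℕ)),
        MeasurableSpace.comap (ε k) inferInstance)
        = MeasurableSpace.comap (ε (Sum.inr j)) inferInstance := by simp
    rw [hleft] at h
    refine indep_of_indep_of_le_right h ?_
    rw [hF]
    refine sup_le ?_ (iSup₂_le fun k hk => ?_)
    · refine Measurable.comap_le ?_
      rw [hybar₁, hy₁]
      refine measurable_const.mul (Finset.measurable_sum _ fun i _ => measurable_const.add ?_)
      exact Measurable.of_comap_le (le_biSup (fun k => MeasurableSpace.comap (ε k) inferInstance) (by simp))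
    · have hkj : k ≠ j := Nat.ne_of_lt (Finset.mem_range.mp hk)
      exact le_biSup (fun k => MeasurableSpace.comap (ε k) inferInstance) (by simp [hkj])
  -- independence of ε₁ᵢ from G i
  have hindep₁ : ∀ i : Fin n₁,
      Indep (MeasurableSpace.comap (ε (Sum.inl i)) inferInstance) (G i) μ := by
    intro i
    have h := indep_iSup_of_disjoint (fun k => (hεmeas k).comap_le) hεindep
      (disjoint_compl_right (a := ({Sum.inl i} : Set (Fin n₁ ⊕ ℕ))))
    have hleft : (⨆ k ∈ ({Sum.inl i} : Set (Fin n₁ ⊕ ℕ)),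
        MeasurableSpace.comap (ε k) inferInstance)
        = MeasurableSpace.comap (ε (Sum.inl i)) inferInstance := by simp
    rw [hleft] at h
    refine indep_of_indep_of_le_right h ?_
    rw [hG]
    refine iSup₂_le fun k hk => ?_
    have h1 : MeasurableSpace.comap (y₁ k) inferInstance ≤
        MeasurableSpace.comap (ε (Sum.inl k)) inferInstance := by
      rw [hy₁]
      exact (measurable_const.add (Measurable.of_comap_le le_rfl)).comap_le
    refine h1.trans (le_biSup (fun k => MeasurableSpace.comap (ε k) inferInstance) ?_)
    have hki : k ≠ i := ne_of_lt hk
    simp [hki]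
  -- stage-2 conditional expectations
  have hA : ∀ j : ℕ, μ[fun ω => (𝒟₂ j ω) ^ 2 | F j] =ᵐ[μ]
      fun ω => (η' (ξ (ybar₁ ω)) θ₀) ^ 2 / σ ^ 2 := by
    intro j
    have heq : (fun ω => (𝒟₂ j ω) ^ 2) =
        (fun ω => ((σ ^ 2)⁻¹ * η' (ξ (ybar₁ ω)) θ₀) ^ 2) *
          (fun ω => ε (Sum.inr j) ω ^ 2) := by
      funext ω
      simp only [h𝒟₂, hy₂, Pi.mul_apply]
      ring
    have hybarFj : Measurable[F j] ybar₁ := by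
      rw [hF]; exact Measurable.of_comap_le le_sup_left
    have hfjm : StronglyMeasurable[F j]
        (fun ω => ((σ ^ 2)⁻¹ * η' (ξ (ybar₁ ω)) θ₀) ^ 2) :=
      ((measurable_const.mul ((hη'.comp hξ).comp hybarFj)).pow_const 2).stronglyMeasurable
    have hgint : Integrable (fun ω => ε (Sum.inr j) ω ^ 2) μ := hε2int _
    have hfgint : Integrable ((fun ω => ((σ ^ 2)⁻¹ * η' (ξ (ybar₁ ω)) θ₀) ^ 2) *
        (fun ω => ε (Sum.inr j) ω ^ 2)) μ := by
      refine Integrable.bdd_mul (c := ((σ ^ 2)⁻¹ * C) ^ 2) hgint ((hfjm.mono (hFle j)).aestronglyMeasurable)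
        (ae_of_all _ fun ω => ?_)
      have h1 : |η' (ξ (ybar₁ ω)) θ₀| ≤ C := hC _ (hξab _)
      have h2 : ‖((σ ^ 2)⁻¹ * η' (ξ (ybar₁ ω)) θ₀) ^ 2‖ =
          ((σ ^ 2)⁻¹ * |η' (ξ (ybar₁ ω)) θ₀|) ^ 2 := by
        rw [Real.norm_eq_abs, abs_of_nonneg (sq_nonneg _), mul_pow, mul_pow, sq_abs]
      rw [h2]
      refine pow_le_pow_left₀ (by positivity) ?_ 2
      exact mul_le_mul_of_nonneg_left h1 (by positivity)
    have hpull := condExp_mul_of_stronglyMeasurable_left hfjm hfgint hgint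
    have hgm : StronglyMeasurable[MeasurableSpace.comap (ε (Sum.inr j)) inferInstance]
        (fun ω => ε (Sum.inr j) ω ^ 2) :=
      ((Measurable.of_comap_le le_rfl).pow_const 2).stronglyMeasurable
    have hcond := condExp_indep_eq (hεmeas (Sum.inr j)).comap_le (hFle j) hgm (hindep₂ j)
    rw [heq]
    refine hpull.trans ?_
    filter_upwards [hcond] with ω hω
    simp only [Pi.mul_apply, hω, hε2val (Sum.inr j)]
    field_simp
  -- stage-1 conditional expectations
  have hB : ∀ i : Fin n₁, μ[fun ω' => (𝒟₁ i ω') ^ 2 | G i] =ᵐ[μ]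
      (fun _ => (η' x₁ θ₀) ^ 2 / σ ^ 2) := by
    intro i
    have heq : (fun ω => (𝒟₁ i ω) ^ 2) =
        fun ω => ((σ ^ 2)⁻¹ * η' x₁ θ₀) ^ 2 * ε (Sum.inl i) ω ^ 2 := by
      funext ω
      simp only [h𝒟₁, hy₁]
      ring
    have hfm : StronglyMeasurable[MeasurableSpace.comap (ε (Sum.inl i)) inferInstance]
        (fun ω => ((σ ^ 2)⁻¹ * η' x₁ θ₀) ^ 2 * ε (Sum.inl i) ω ^ 2) :=
      (measurable_const.mul ((Measurable.of_comap_le le_rfl).pow_const 2)).stronglyMeasurable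
    have hcond := condExp_indep_eq (hεmeas (Sum.inl i)).comap_le (hGle i) hfm (hindep₁ i)
    rw [heq]
    refine hcond.trans (Filter.EventuallyEq.of_eq ?_)
    funext ω
    rw [MeasureTheory.integral_const_mul, hε2val (Sum.inl i)]
    field_simp
  refine ⟨fun j _ => hA j, ?_⟩
  have h1 : ∀ᵐ ω ∂μ, ∀ i : Fin n₁,
      (μ[fun ω' => (𝒟₁ i ω') ^ 2 | G i]) ω = (η' x₁ θ₀) ^ 2 / σ ^ 2 := ae_all_iff.mpr hB
  have h2 : ∀ᵐ ω ∂μ, ∀ j : ℕ,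
      (μ[fun ω' => (𝒟₂ j ω') ^ 2 | F j]) ω = (η' (ξ (ybar₁ ω)) θ₀) ^ 2 / σ ^ 2 :=
    ae_all_iff.mpr hA
  filter_upwards [h1, h2] with ω hω1 hω2
  rw [Finset.sum_congr rfl fun i _ => hω1 i, Finset.sum_congr rfl fun j _ => hω2 j,
    Finset.sum_const, Finset.sum_const, Finset.card_range, Finset.card_univ, Fintype.card_fin,
    nsmul_eq_mul, nsmul_eq_mul]
  ring
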